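/- For all nonnegative integers m and n, J_{n+1}^m = (m+1) \sum_{s=0}^{n} \binom{n}{s} J_s^{m+1}. -/

import Mathlib

open Finset

/-- Stirling numbers of the second kind. -/
def stirling2 : ℕ → ℕ → ℕ
  | 0, 0 => 1
  | 0, _ + 1 => 0
  | _ + 1, 0 => 0
  | n + 1, k + 1 => (k + 1) * stirling2 n (k + 1) + stirling2 n k

/-- Fubini numbers: number of preferential arrangements of an n-set. -/
def fubini (n : ℕ) : ℕ := ∑ s ∈ range (n + 1), stirling2 n s * s.factorial

/-- Number of barred preferential arrangements of an n-set with m bars. -/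
def barred (n m : ℕ) : ℕ :=
  ∑ s ∈ range (n + 1), stirling2 n s * s.factorial * (m + s).choose m

/-- Number of restricted barred preferential arrangements. -/
def restrictedBarred (n m : ℕ) : ℕ :=
  ∑ s ∈ range (n + 1), n.choose s * m ^ s * fubini (n - s)

lemma stirling2_eq_zero : ∀ n k, n < k → stirling2 n k = 0
  | 0, 0, h => absurd h (lt_irrefl 0)
  | 0, _+1, _ => rfl
  | n+1, 0, h => absurd h (Nat.not_lt_zero _)
  | n+1, k+1, h => by
    show (k + 1) * stirling2 n (k + 1) + stirling2 n k = 0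
    rw [stirling2_eq_zero n (k+1) (by omega), stirling2_eq_zero n k (by omega)]
    simp

lemma key_binom (m k : ℕ) : (k+1) * (m+k+1).choose m = (m+1) * (m+k+1).choose (m+1) := by
  have h1 := Nat.add_one_mul_choose_eq (m+k) m
  have h2 := Nat.add_one_mul_choose_eq (m+k) k
  have h3 : (m+k).choose k = (m+k).choose m := by
    rw [← Nat.choose_symm (Nat.le_add_left k m)]
    congr 1; omega
  have h4 : (m+k+1).choose m = (m+k+1).choose (k+1) := by
    rw [← Nat.choose_symm (by omega : m ≤ m+k+1)]
    congr 1; omega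
  calc (k+1) * (m+k+1).choose m = (m+k+1).choose (k+1) * (k+1) := by rw [h4, mul_comm]
    _ = (m+k+1) * (m+k).choose k := h2.symm
    _ = (m+k+1) * (m+k).choose m := by rw [h3]
    _ = (m+k+1).choose (m+1) * (m+1) := h1
    _ = (m+1) * (m+k+1).choose (m+1) := mul_comm _ _

lemma stirling2_succ_eq (n : ℕ) :
    ∀ k, stirling2 (n+1) (k+1) = ∑ j ∈ range (n+1), n.choose j * stirling2 j k := by
  induction n with
  | zero =>
    intro k
    show (k+1) * stirling2 0 (k+1) + stirling2 0 k = _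
    cases k <;> simp [stirling2]
  | succ n ih =>
    intro k
    have expand : ∑ j ∈ range (n+2), (n+1).choose j * stirling2 j k
        = (∑ i ∈ range (n+1), n.choose i * stirling2 (i+1) k)
          + ∑ j ∈ range (n+1), n.choose j * stirling2 j k := by
      rw [Finset.sum_range_succ' _ (n+1)]
      have h1 : ∀ i ∈ range (n+1), (n+1).choose (i+1) * stirling2 (i+1) k
          = n.choose i * stirling2 (i+1) k + n.choose (i+1) * stirling2 (i+1) k := by
        intro i _; rw [Nat.choose_succ_succ, add_mul]
      rw [Finset.sum_congr rfl h1, Finset.sum_add_distrib]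
      have h2 : (∑ i ∈ range (n+1), n.choose (i+1) * stirling2 (i+1) k)
          + (n+1).choose 0 * stirling2 0 k
          = ∑ j ∈ range (n+2), n.choose j * stirling2 j k := by
        rw [Finset.sum_range_succ' (fun j => n.choose j * stirling2 j k) (n+1)]
        simp
      have htop : ∑ j ∈ range (n+2), n.choose j * stirling2 j k
          = ∑ j ∈ range (n+1), n.choose j * stirling2 j k := by
        rw [Finset.sum_range_succ, Nat.choose_eq_zero_of_lt (by omega)]
        simp
      omega
    rw [expand]
    cases k with
    | zero =>
      have hz : ∀ i ∈ range (n+1), n.choose i * stirling2 (i+1) 0 = 0 := by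
        intro i _; rfl
      rw [Finset.sum_congr rfl hz]
      show 1 * stirling2 (n+1) 1 + stirling2 (n+1) 0 = _
      have : stirling2 (n+1) 0 = 0 := rfl
      rw [this, ih 0]
      simp
    | succ k' =>
      have hs : ∀ i ∈ range (n+1), n.choose i * stirling2 (i+1) (k'+1)
          = (k'+1) * (n.choose i * stirling2 i (k'+1)) + n.choose i * stirling2 i k' := by
        intro i _
        show n.choose i * ((k'+1) * stirling2 i (k'+1) + stirling2 i k') = _
        ring
      rw [Finset.sum_congr rfl hs, Finset.sum_add_distrib, ← Finset.mul_sum,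
        ← ih (k'+1), ← ih k']
      show (k'+1+1) * stirling2 (n+1) (k'+1+1) + stirling2 (n+1) (k'+1) = _
      ring

theorem barred_succ (m n : ℕ) :
    barred (n + 1) m = (m + 1) * ∑ s ∈ range (n + 1), n.choose s * barred s (m + 1) := by
  have hpt : ∀ k j : ℕ, stirling2 j k * (k+1).factorial * (m+(k+1)).choose m
      = (m+1) * (stirling2 j k * k.factorial * ((m+1)+k).choose (m+1)) := by
    intro k j
    have h := key_binom m k
    have e1 : m+(k+1) = m+k+1 := by ring
    have e2 : (m+1)+k = m+k+1 := by ring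
    rw [e1, e2, Nat.factorial_succ]
    calc stirling2 j k * ((k+1) * k.factorial) * (m+k+1).choose m
        = ((k+1) * (m+k+1).choose m) * (stirling2 j k * k.factorial) := by ring
      _ = ((m+1) * (m+k+1).choose (m+1)) * (stirling2 j k * k.factorial) := by rw [h]
      _ = (m+1) * (stirling2 j k * k.factorial * (m+k+1).choose (m+1)) := by ring
  have htr : ∀ j ∈ range (n+1),
      ∑ k ∈ range (n+1), stirling2 j k * k.factorial * ((m+1)+k).choose (m+1)
        = barred j (m+1) := by
    intro j hj
    rw [mem_range] at hj
    unfold barred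
    symm
    apply Finset.sum_subset
    · intro x hx; rw [mem_range] at *; omega
    · intro x hx hnx
      rw [mem_range] at hx hnx
      rw [stirling2_eq_zero j x (by omega), zero_mul, zero_mul]
  calc barred (n+1) m
      = (∑ k ∈ range (n+1), stirling2 (n+1) (k+1) * (k+1).factorial * (m+(k+1)).choose m)
        + stirling2 (n+1) 0 * Nat.factorial 0 * (m+0).choose m := by
        unfold barred; rw [Finset.sum_range_succ']
    _ = ∑ k ∈ range (n+1), stirling2 (n+1) (k+1) * (k+1).factorial * (m+(k+1)).choose m := by
        have : stirling2 (n+1) 0 = 0 := rfl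
        rw [this]; simp
    _ = ∑ k ∈ range (n+1), ∑ j ∈ range (n+1),
          n.choose j * ((m+1) * (stirling2 j k * k.factorial * ((m+1)+k).choose (m+1))) := by
        refine Finset.sum_congr rfl fun k _ => ?_
        rw [stirling2_succ_eq n k, Finset.sum_mul, Finset.sum_mul]
        refine Finset.sum_congr rfl fun j _ => ?_
        rw [mul_assoc, ← hpt k j]; ring
    _ = ∑ j ∈ range (n+1), ∑ k ∈ range (n+1),
          n.choose j * ((m+1) * (stirling2 j k * k.factorial * ((m+1)+k).choose (m+1))) :=
        Finset.sum_comm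
    _ = (m+1) * ∑ j ∈ range (n+1), n.choose j *
          ∑ k ∈ range (n+1), stirling2 j k * k.factorial * ((m+1)+k).choose (m+1) := by
        rw [Finset.mul_sum]
        refine Finset.sum_congr rfl fun j _ => ?_
        rw [Finset.mul_sum, Finset.mul_sum]
        refine (Finset.sum_congr rfl fun k _ => ?_)
        ring
    _ = (m+1) * ∑ j ∈ range (n+1), n.choose j * barred j (m+1) := by
        congr 1
        exact Finset.sum_congr rfl fun j hj => by rw [htr j hj]
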